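/- Let d ≥ 3 and let Φ be the quantum channel on d×d complex matrices with Kraus operators { (1/√(d−1)) E_{ij} : i, j ∈ [d], i ≠ j }. Then η_tr(Φ) < 1 while the quantum Doeblin coefficient vanishes: α(Φ) = 0. -/

import Mathlib

open Matrix Kronecker BigOperators
open scoped ComplexOrder

noncomputable section

/-- The trace norm (sum of singular values) of a complex matrix: `tr √(AᴴA)`. -/
def traceNorm {m n : Type*} [Fintype m] [Fintype n] [DecidableEq n] (A : Matrix m n ℂ) : ℝ :=
  (let hA := (Matrix.posSemidef_conjTranspose_mul_self A).1;
    (hA.eigenvectorUnitary.1 * diagonal (fun i => ((√(hA.eigenvalues i) : ℝ) : ℂ)) *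
      (star hA.eigenvectorUnitary : Matrix n n ℂ))).trace.re

/-- A density matrix: positive semidefinite with trace one. -/
def IsDensity {n : Type*} [Fintype n] [DecidableEq n] (ρ : Matrix n n ℂ) : Prop :=
  ρ.PosSemidef ∧ ρ.trace = 1

/-- Trace norm contraction coefficient of a map on matrices. -/
def etaTr {dA dB : ℕ} (Φ : Matrix (Fin dA) (Fin dA) ℂ → Matrix (Fin dB) (Fin dB) ℂ) : ℝ :=
  sSup {r : ℝ | ∃ ρ σ : Matrix (Fin dA) (Fin dA) ℂ, IsDensity ρ ∧ IsDensity σ ∧ ρ ≠ σ ∧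
    r = traceNorm (Φ ρ - Φ σ) / traceNorm (ρ - σ)}

/-- Optimal success probability for transmitting one of `k` messages through `Φ`. -/
def Psucc {dA dB : ℕ} (Φ : Matrix (Fin dA) (Fin dA) ℂ → Matrix (Fin dB) (Fin dB) ℂ)
    (k : ℕ) : ℝ :=
  sSup {r : ℝ | ∃ (M : Fin k → Matrix (Fin dB) (Fin dB) ℂ)
      (ρ : Fin k → Matrix (Fin dA) (Fin dA) ℂ),
    (∀ i, (M i).PosSemidef) ∧ (∑ i, M i = 1) ∧ (∀ i, IsDensity (ρ i)) ∧
    r = (1 / (k : ℝ)) * ∑ i, ((M i * Φ (ρ i)).trace).re}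

/-- The Euclidean (ℓ₂) norm of a complex vector. -/
def l2norm {n : Type*} [Fintype n] (v : n → ℂ) : ℝ :=
  Real.sqrt (∑ i, ‖v i‖ ^ 2)

/-- Choi state of a map on matrices: `(1/dA) ∑ᵢⱼ Eᵢⱼ ⊗ Φ(Eᵢⱼ)`. -/
def choi {dA dB : ℕ} (Φ : Matrix (Fin dA) (Fin dA) ℂ → Matrix (Fin dB) (Fin dB) ℂ) :
    Matrix (Fin dA × Fin dB) (Fin dA × Fin dB) ℂ :=
  (dA : ℂ)⁻¹ • ∑ i : Fin dA, ∑ j : Fin dA,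
    (Matrix.single i j (1 : ℂ)) ⊗ₖ (Φ (Matrix.single i j (1 : ℂ)))

open scoped MatrixOrder in
lemma traceNorm_eq_of_sq {m n : Type*} [Fintype m] [Fintype n] [DecidableEq n]
    (A : Matrix m n ℂ) (B : Matrix n n ℂ) (hB : B.PosSemidef) (hsq : B ^ 2 = Aᴴ * A) :
    traceNorm A = B.trace.re := by
  have hA := Matrix.posSemidef_conjTranspose_mul_self A
  have h1 : traceNorm A = (hA.1.cfc Real.sqrt).trace.re := rfl
  rw [h1, ← hA.1.cfc_eq, ← cfcₙ_eq_cfc (hf0 := Real.sqrt_zero),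
    ← CFC.sqrt_eq_real_sqrt _ hA.nonneg,
    (CFC.sqrt_eq_iff _ _ hA.nonneg hB.nonneg).mpr (by rw [← hsq, pow_two])]

lemma traceNorm_diagonal {n : Type*} [Fintype n] [DecidableEq n] (g : n → ℂ) :
    traceNorm (Matrix.diagonal g) = ∑ i, ‖g i‖ := by
  set B : Matrix n n ℂ := Matrix.diagonal (fun i => (‖g i‖ : ℂ)) with hBdef
  have hB : B.PosSemidef := Matrix.posSemidef_diagonal_iff.mpr fun i => by
    rw [Complex.zero_le_real]; exact norm_nonneg _
  have hsq : B ^ 2 = (Matrix.diagonal g)ᴴ * Matrix.diagonal g := by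
    rw [pow_two, hBdef, Matrix.diagonal_conjTranspose, Matrix.diagonal_mul_diagonal,
      Matrix.diagonal_mul_diagonal]
    have : ∀ z : ℂ, (‖z‖ : ℂ) * (‖z‖ : ℂ) = star z * z := by
      intro z
      rw [Complex.star_def, ← Complex.normSq_eq_conj_mul_self, ← Complex.ofReal_mul,
        Complex.normSq_eq_norm_sq, pow_two]
    simp only [Pi.star_apply, this]
  have := traceNorm_eq_of_sq (Matrix.diagonal g) B hB hsq
  rw [this, hBdef, Matrix.trace_diagonal]
  rw [Complex.re_sum]
  rfl

lemma traceNorm_hermitian {n : Type*} [Fintype n] [DecidableEq n]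
    {Δ : Matrix n n ℂ} (hΔ : Δ.IsHermitian) :
    traceNorm Δ = ∑ k, |hΔ.eigenvalues k| := by
  set U : Matrix n n ℂ := (hΔ.eigenvectorUnitary : Matrix n n ℂ) with hU
  have hUU : star U * U = 1 := (Matrix.mem_unitaryGroup_iff').mp hΔ.eigenvectorUnitary.2
  have hUU' : U * star U = 1 := (Matrix.mem_unitaryGroup_iff).mp hΔ.eigenvectorUnitary.2
  set B : Matrix n n ℂ := U * Matrix.diagonal (fun k => ((|hΔ.eigenvalues k| : ℝ) : ℂ)) * star U
    with hBdef
  have hB : B.PosSemidef := by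
    rw [hBdef, Matrix.star_eq_conjTranspose U]
    exact Matrix.PosSemidef.mul_mul_conjTranspose_same
      (Matrix.posSemidef_diagonal_iff.mpr fun i => by
        rw [Complex.zero_le_real]; exact abs_nonneg _) U
  have hspec := hΔ.spectral_theorem
  have key : ∀ (D E : Matrix n n ℂ), (U * D * star U) * (U * E * star U)
      = U * (D * E) * star U := by
    intro D E
    have h1 : (U * D * star U) * (U * E * star U)
        = U * D * ((star U * U) * (E * star U)) := by simp only [Matrix.mul_assoc]
    rw [h1, hUU, Matrix.one_mul]
    simp only [Matrix.mul_assoc]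
  have hdiag : Matrix.diagonal (fun k => ((|hΔ.eigenvalues k| : ℝ) : ℂ)) *
      Matrix.diagonal (fun k => ((|hΔ.eigenvalues k| : ℝ) : ℂ))
      = Matrix.diagonal (RCLike.ofReal ∘ hΔ.eigenvalues) *
        Matrix.diagonal (RCLike.ofReal ∘ hΔ.eigenvalues) := by
    rw [Matrix.diagonal_mul_diagonal, Matrix.diagonal_mul_diagonal]
    have : (fun i => ((|hΔ.eigenvalues i| : ℝ) : ℂ) * ((|hΔ.eigenvalues i| : ℝ) : ℂ))
        = (fun i => (RCLike.ofReal ∘ hΔ.eigenvalues) i * (RCLike.ofReal ∘ hΔ.eigenvalues) i) := by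
      funext i
      rw [← Complex.ofReal_mul, abs_mul_abs_self, Complex.ofReal_mul]
      rfl
    rw [this]
  have hsq : B ^ 2 = Δᴴ * Δ := by
    rw [hΔ.eq, pow_two, hBdef, key, hdiag, ← key]
    rw [Unitary.conjStarAlgAut_apply, ← hU] at hspec; rw [← hspec]
  have hBsqrt := traceNorm_eq_of_sq Δ B hB hsq
  rw [hBsqrt, hBdef, Matrix.trace_mul_cycle, hUU,
    Matrix.one_mul, Matrix.trace_diagonal]
  rw [Complex.re_sum]
  simp [Complex.ofReal_re]

lemma star_mul_self_eq {z : ℂ} : star z * z = ((‖z‖^2 : ℝ) : ℂ) := by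
  rw [Complex.star_def, ← Complex.normSq_eq_conj_mul_self, Complex.normSq_eq_norm_sq]

lemma sum_norm_diag_le {n : Type*} [Fintype n] [DecidableEq n]
    {Δ : Matrix n n ℂ} (hΔ : Δ.IsHermitian) :
    ∑ i, ‖Δ i i‖ ≤ traceNorm Δ := by
  rw [traceNorm_hermitian hΔ]
  set U : Matrix n n ℂ := (hΔ.eigenvectorUnitary : Matrix n n ℂ) with hU
  have hUU : star U * U = 1 := (Matrix.mem_unitaryGroup_iff').mp hΔ.eigenvectorUnitary.2
  have hcol : ∀ b, ∑ i, ‖U i b‖^2 = 1 := by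
    intro b
    have h1 : (star U * U) b b = 1 := by rw [hUU]; simp
    rw [Matrix.mul_apply] at h1
    have h2 : ∀ i, (star U) b i * U i b = ((‖U i b‖^2 : ℝ) : ℂ) := by
      intro i
      rw [Matrix.star_apply, star_mul_self_eq]
    rw [Finset.sum_congr rfl fun i _ => h2 i, ← Complex.ofReal_sum] at h1
    exact_mod_cast h1
  have hentry : ∀ i, Δ i i = ∑ b, U i b * ((hΔ.eigenvalues b : ℝ) : ℂ) * star (U i b) := by
    intro i
    conv_lhs => rw [hΔ.spectral_theorem, Unitary.conjStarAlgAut_apply]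
    rw [Matrix.mul_apply]
    refine Finset.sum_congr rfl fun b _ => ?_
    rw [Matrix.mul_diagonal, Matrix.star_apply]
    rfl
  have hbound : ∀ i, ‖Δ i i‖ ≤ ∑ b, |hΔ.eigenvalues b| * ‖U i b‖^2 := by
    intro i
    rw [hentry i]
    refine (norm_sum_le _ _).trans (le_of_eq (Finset.sum_congr rfl fun b _ => ?_))
    rw [norm_mul, norm_mul, norm_star, Complex.norm_real, Real.norm_eq_abs]
    ring
  calc ∑ i, ‖Δ i i‖ ≤ ∑ i, ∑ b, |hΔ.eigenvalues b| * ‖U i b‖^2 :=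
        Finset.sum_le_sum fun i _ => hbound i
    _ = ∑ b, |hΔ.eigenvalues b| * ∑ i, ‖U i b‖^2 := by
        rw [Finset.sum_comm]
        exact Finset.sum_congr rfl fun b _ => by rw [Finset.mul_sum]
    _ = ∑ b, |hΔ.eigenvalues b| := by
        exact Finset.sum_congr rfl fun b _ => by rw [hcol b, mul_one]

lemma traceNorm_pos {n : Type*} [Fintype n] [DecidableEq n]
    {Δ : Matrix n n ℂ} (hΔ : Δ.IsHermitian) (hne : Δ ≠ 0) :
    0 < traceNorm Δ := by
  rw [traceNorm_hermitian hΔ]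
  rcases (Finset.sum_nonneg (fun k _ => abs_nonneg (hΔ.eigenvalues k))).lt_or_eq with h | h
  · exact h
  · exfalso
    apply hne
    have hzero : ∀ k, hΔ.eigenvalues k = 0 := by
      intro k
      have := (Finset.sum_eq_zero_iff_of_nonneg
        (fun k _ => abs_nonneg (hΔ.eigenvalues k))).mp h.symm k (Finset.mem_univ k)
      exact abs_eq_zero.mp this
    have : Matrix.diagonal (RCLike.ofReal ∘ hΔ.eigenvalues : n → ℂ) = 0 := by
      rw [show (RCLike.ofReal ∘ hΔ.eigenvalues : n → ℂ) = 0 from funext fun k => by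
        simp [Function.comp_apply, hzero k]]
      exact Matrix.diagonal_zero
    conv_lhs => rw [hΔ.spectral_theorem]
    rw [this, map_zero]

lemma choi_eq {d : ℕ} (c : ℂ)
    (Φ : Matrix (Fin d) (Fin d) ℂ → Matrix (Fin d) (Fin d) ℂ)
    (hΦdiag : ∀ x, Φ x = c • Matrix.diagonal (fun k => x.trace - x k k)) :
    choi Φ = Matrix.diagonal (fun q : Fin d × Fin d =>
      if q.1 = q.2 then 0 else (d : ℂ)⁻¹ * c) := by
  rw [choi]
  ext ⟨a, b⟩ ⟨a', b'⟩
  simp only [Matrix.smul_apply, Matrix.sum_apply, smul_eq_mul]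
  have hterm : ∀ i j : Fin d,
      ((Matrix.single i j (1:ℂ)) ⊗ₖ (Φ (Matrix.single i j (1:ℂ)))) (a,b) (a',b')
      = (if i = a ∧ j = a' then 1 else 0) *
        (c * if b = b' then (Matrix.single i j (1:ℂ)).trace
            - (Matrix.single i j (1:ℂ)) b b else 0) := by
    intro i j
    rw [Matrix.kroneckerMap_apply, hΦdiag]
    simp [Matrix.smul_apply, Matrix.diagonal_apply, smul_eq_mul,
      Matrix.single, Matrix.of_apply, ite_and, mul_comm]
  rw [Finset.sum_congr rfl (fun i _ => Finset.sum_congr rfl (fun j _ => hterm i j))]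
  simp only [ite_and, ite_mul, zero_mul, one_mul]
  rw [Finset.sum_eq_single a (fun x _ hx => Finset.sum_eq_zero fun x1 _ => if_neg hx)
    (fun h => absurd (Finset.mem_univ a) h)]
  simp only [eq_self_iff_true, if_true]
  rw [Finset.sum_ite_eq' Finset.univ a', if_pos (Finset.mem_univ a')]
  rw [Matrix.diagonal_apply]
  simp only [Prod.mk.injEq]
  by_cases ha : a = a' <;> by_cases hb : b = b'
  · subst ha; subst hb
    rw [Matrix.trace_single_eq_same]
    simp only [and_self, eq_self_iff_true, if_true]
    by_cases hab : a = b
    · subst hab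
      simp [Matrix.single, Matrix.of_apply]
    · simp [Matrix.single, Matrix.of_apply, hab]
  · simp [ha, hb]
  · subst hb
    rw [Matrix.trace_single_eq_of_ne _ _ _ ha]
    have : Matrix.single a a' (1:ℂ) b b = 0 := by
      simp only [Matrix.single, Matrix.of_apply, ite_eq_right_iff, and_imp]
      intro h1 h2; exact absurd (h1.trans h2.symm) ha
    rw [this]
    simp [ha]
  · simp [ha, hb]

lemma phi_diag {d : ℕ} (hd : 3 ≤ d)
    (K : {p : Fin d × Fin d // p.1 ≠ p.2} → Matrix (Fin d) (Fin d) ℂ)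
    (hKdef : ∀ p, K p = ((Real.sqrt ((d : ℝ) - 1) : ℂ))⁻¹ •
      Matrix.single p.1.1 p.1.2 (1 : ℂ))
    (Φ : Matrix (Fin d) (Fin d) ℂ → Matrix (Fin d) (Fin d) ℂ)
    (hΦ : ∀ x, Φ x = ∑ p, K p * x * (K p)ᴴ) :
    ∀ x, Φ x = (((d:ℝ)-1 : ℝ) : ℂ)⁻¹ • Matrix.diagonal (fun k => x.trace - x k k) := by
  intro x
  have hd1 : (0:ℝ) ≤ (d:ℝ) - 1 := by
    have : (3:ℝ) ≤ d := by exact_mod_cast hd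
    linarith
  have hc : (((Real.sqrt ((d : ℝ) - 1) : ℂ))⁻¹) * star (((Real.sqrt ((d : ℝ) - 1) : ℂ))⁻¹)
      = (((d:ℝ)-1 : ℝ) : ℂ)⁻¹ := by
    rw [Complex.star_def, ← Complex.ofReal_inv, Complex.conj_ofReal, ← Complex.ofReal_mul,
      ← mul_inv, Real.mul_self_sqrt hd1, Complex.ofReal_inv]
  rw [hΦ]
  ext k l
  simp only [Matrix.sum_apply]
  have hterm : ∀ p : {p : Fin d × Fin d // p.1 ≠ p.2},
      (K p * x * (K p)ᴴ) k l = (((d:ℝ)-1 : ℝ) : ℂ)⁻¹ *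
        (if k = p.1.1 ∧ l = p.1.1 then x p.1.2 p.1.2 else 0) := by
    intro p
    rw [hKdef]
    set c := ((Real.sqrt ((d : ℝ) - 1) : ℂ))⁻¹
    set i := p.1.1; set j := p.1.2
    have hE : ((Matrix.single i j (1:ℂ) : Matrix (Fin d) (Fin d) ℂ) * x * (Matrix.single i j (1:ℂ) : Matrix (Fin d) (Fin d) ℂ)ᴴ) k l
        = if k = i ∧ l = i then x j j else 0 := by
      simp only [mul_apply, conjTranspose_apply, Matrix.single, of_apply,
        ite_mul, zero_mul, one_mul, mul_ite, mul_zero, mul_one, apply_ite star,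
        star_zero, star_one]
      by_cases hl : i = l <;> by_cases hk : i = k <;>
        simp [ite_and, Finset.sum_ite_eq, Finset.sum_ite_eq', hl, hk, eq_comm] <;>
        intro h1 _; exact absurd h1.symm hk
    simp only [conjTranspose_smul, Matrix.smul_mul, Matrix.mul_smul, Matrix.smul_apply,
      smul_eq_mul, hE]
    rw [← hc]; ring
  rw [Finset.sum_congr rfl (fun p _ => hterm p), ← Finset.mul_sum]
  simp only [Matrix.smul_apply, Matrix.diagonal_apply, smul_eq_mul]
  congr 1
  rw [← Finset.sum_subtype (Finset.univ.filter fun p : Fin d × Fin d => p.1 ≠ p.2)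
    (fun p => by simp) (fun p => if k = p.1 ∧ l = p.1 then x p.2 p.2 else 0)]
  rw [Finset.sum_filter, Fintype.sum_prod_type]
  by_cases hkl : k = l
  · subst hkl
    simp only [and_self]
    have h1 : ∀ (i j : Fin d), (if i ≠ j then if k = i then x j j else 0 else 0)
        = if k = i then (if j = k then 0 else x j j) else 0 := by
      intro i j
      split_ifs with h1 h2 h3 <;> first | rfl | (subst_vars; tauto)
    rw [Finset.sum_congr rfl (fun i _ => Finset.sum_congr rfl (fun j _ => h1 i j))]
    rw [Finset.sum_eq_single k
      (fun i _ hik => Finset.sum_eq_zero fun j _ => if_neg (fun h => hik h.symm))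
      (fun h => absurd (Finset.mem_univ k) h)]
    simp only [eq_self_iff_true, if_true]
    have h2 : ∀ j : Fin d, (if j = k then (0:ℂ) else x j j)
        = x j j - (if j = k then x j j else 0) := by
      intro j; split_ifs <;> simp
    rw [Finset.sum_congr rfl (fun j _ => h2 j), Finset.sum_sub_distrib,
      Finset.sum_ite_eq' Finset.univ k]
    simp [Matrix.trace, Matrix.diag]
  · rw [if_neg hkl]
    apply Finset.sum_eq_zero; intro i _
    apply Finset.sum_eq_zero; intro j _
    split_ifs with h1 h2
    · exact absurd (h2.1.trans h2.2.symm) hkl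
    · rfl
    · rfl


lemma psd_diag_re_nonneg {n : Type*} [Fintype n] [DecidableEq n]
    {M : Matrix n n ℂ} (hM : M.PosSemidef) (q : n) : 0 ≤ (M q q).re := by
  have h := hM.re_dotProduct_nonneg (Pi.single q 1)
  simpa [dotProduct, Matrix.mulVec, Pi.single_apply, apply_ite,
    Finset.sum_ite_eq, Finset.sum_ite_eq', mul_comm] using h

/-- for `d ≥ 3`, the channel with Kraus operators `(1/√(d−1))·E_{ij}`,
`i ≠ j`, satisfies `η_tr(Φ) < 1` while its quantum Doeblin coefficient
`α(Φ) = sup{tr X : X Hermitian, I ⊗ X ≼ J(Φ)}` vanishes. -/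
theorem etaTr_lt_one_and_doeblin_zero {d : ℕ} (hd : 3 ≤ d)
    (K : {p : Fin d × Fin d // p.1 ≠ p.2} → Matrix (Fin d) (Fin d) ℂ)
    (hKdef : ∀ p, K p = ((Real.sqrt ((d : ℝ) - 1) : ℂ))⁻¹ •
      Matrix.single p.1.1 p.1.2 (1 : ℂ))
    (Φ : Matrix (Fin d) (Fin d) ℂ → Matrix (Fin d) (Fin d) ℂ)
    (hΦ : ∀ x, Φ x = ∑ p, K p * x * (K p)ᴴ) :
    etaTr Φ < 1 ∧
    sSup {r : ℝ | ∃ X : Matrix (Fin d) (Fin d) ℂ, X.IsHermitian ∧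
      (choi Φ - (1 : Matrix (Fin d) (Fin d) ℂ) ⊗ₖ X).PosSemidef ∧
      r = X.trace.re} = 0 := by
  have hd1 : (0:ℝ) ≤ (d:ℝ) - 1 := by
    have : (3:ℝ) ≤ d := by exact_mod_cast hd
    linarith
  have hd2 : (2:ℝ) ≤ (d:ℝ) - 1 := by
    have : (3:ℝ) ≤ d := by exact_mod_cast hd
    linarith
  set c : ℂ := (((d:ℝ) - 1 : ℝ) : ℂ)⁻¹ with hc
  have hΦdiag : ∀ x, Φ x = c • Matrix.diagonal (fun k => x.trace - x k k) :=
    phi_diag hd K hKdef Φ hΦ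
  have hnormc : ‖c‖ = ((d:ℝ) - 1)⁻¹ := by
    rw [hc, norm_inv, Complex.norm_real, Real.norm_eq_abs, abs_of_nonneg hd1]
  constructor
  · -- etaTr Φ < 1
    have hub : ∀ r ∈ {r : ℝ | ∃ ρ σ : Matrix (Fin d) (Fin d) ℂ, IsDensity ρ ∧ IsDensity σ ∧
        ρ ≠ σ ∧ r = traceNorm (Φ ρ - Φ σ) / traceNorm (ρ - σ)}, r ≤ 1/2 := by
      rintro r ⟨ρ, σ, hρ, hσ, hρσ, rfl⟩
      set Δ := ρ - σ with hΔdef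
      have hΔherm : Δ.IsHermitian := hρ.1.1.sub hσ.1.1
      have hΔne : Δ ≠ 0 := sub_ne_zero.mpr hρσ
      have hpos := traceNorm_pos hΔherm hΔne
      have hN : Φ ρ - Φ σ = Matrix.diagonal (fun k => c * (σ k k - ρ k k)) := by
        ext k l
        rw [Matrix.sub_apply, hΦdiag ρ, hΦdiag σ, Matrix.smul_apply, Matrix.smul_apply]
        by_cases hkl : k = l
        · subst hkl
          simp only [Matrix.diagonal_apply_eq, smul_eq_mul, hρ.2, hσ.2]
          ring
        · simp only [Matrix.diagonal_apply_ne _ hkl, smul_eq_mul, mul_zero, sub_zero]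
      have hnum : traceNorm (Φ ρ - Φ σ) = ((d:ℝ) - 1)⁻¹ * ∑ k, ‖Δ k k‖ := by
        rw [hN, traceNorm_diagonal, Finset.mul_sum]
        refine Finset.sum_congr rfl fun k _ => ?_
        rw [norm_mul, hnormc]
        congr 1
        have : Δ k k = ρ k k - σ k k := rfl
        rw [this, ← norm_neg]
        congr 1
        ring
      have hden : ∑ k, ‖Δ k k‖ ≤ traceNorm Δ := sum_norm_diag_le hΔherm
      have hS : 0 ≤ ∑ k, ‖Δ k k‖ := Finset.sum_nonneg fun k _ => norm_nonneg _
      rw [div_le_iff₀ hpos, hnum]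
      calc ((d:ℝ) - 1)⁻¹ * ∑ k, ‖Δ k k‖ ≤ (1/2) * ∑ k, ‖Δ k k‖ := by
            apply mul_le_mul_of_nonneg_right _ hS
            rw [inv_le_comm₀ (by linarith) (by norm_num)]
            linarith
        _ ≤ (1/2) * traceNorm Δ := by linarith
    have : etaTr Φ ≤ 1/2 := Real.sSup_le hub (by norm_num)
    linarith
  · -- Doeblin coefficient is zero
    have hchoi := choi_eq c Φ hΦdiag
    set S := {r : ℝ | ∃ X : Matrix (Fin d) (Fin d) ℂ, X.IsHermitian ∧
      (choi Φ - (1 : Matrix (Fin d) (Fin d) ℂ) ⊗ₖ X).PosSemidef ∧ r = X.trace.re} with hS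
    have hub : ∀ r ∈ S, r ≤ 0 := by
      rintro r ⟨X, hX, hPSD, rfl⟩
      have hdiag : ∀ i : Fin d, (X i i).re ≤ 0 := by
        intro i
        have h := psd_diag_re_nonneg hPSD (i, i)
        rw [Matrix.sub_apply, hchoi, Matrix.diagonal_apply_eq, Matrix.kroneckerMap_apply,
          Matrix.one_apply_eq, one_mul] at h
        simp only [eq_self_iff_true, if_true, Complex.sub_re, Complex.zero_re] at h
        linarith
      rw [Matrix.trace, Complex.re_sum]
      exact Finset.sum_nonpos fun i _ => hdiag i
    have h0 : (0:ℝ) ∈ S := by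
      refine ⟨0, Matrix.isHermitian_zero, ?_, by simp⟩
      have : (1 : Matrix (Fin d) (Fin d) ℂ) ⊗ₖ (0 : Matrix (Fin d) (Fin d) ℂ) = 0 := by
        ext ⟨i, j⟩ ⟨k, l⟩
        simp [Matrix.kroneckerMap_apply]
      rw [this, sub_zero, hchoi]
      refine Matrix.posSemidef_diagonal_iff.mpr fun q => ?_
      by_cases hq : q.1 = q.2
      · rw [if_pos hq]
      · rw [if_neg hq]
        have : ((d:ℂ))⁻¹ * c = (((d:ℝ)⁻¹ * ((d:ℝ) - 1)⁻¹ : ℝ) : ℂ) := by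
          rw [hc]
          push_cast
          ring
        rw [this, Complex.zero_le_real]
        positivity
    refine le_antisymm (Real.sSup_le hub (le_refl 0)) (le_csSup ⟨0, fun r hr => hub r hr⟩ h0)
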